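/- Let I = (F_t)_{t∈[0,1]} be an identity isotopy on the 2-sphere S² (i.e., F₀ = id) and let z₁, z₂, z₃ be three distinct fixed points of F₁. Then there exists another identity isotopy I' = (F'_t)_{t∈[0,1]} from id to F₁ such that F'_t(z_i) = z_i for all t ∈ [0,1] and i = 1, 2, 3. -/

import Mathlib

/-- An identity isotopy on a topological space: a jointly continuous family of
homeomorphisms starting at the identity. -/
def IsIdentityIsotopy {X : Type*} [TopologicalSpace X] (F : unitInterval → X → X) : Prop :=
  Continuous (fun p : unitInterval × X => F p.1 p.2) ∧
  (∀ t, ∃ h : X ≃ₜ X, F t = h) ∧ F 0 = id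


open OnePoint Filter Topology Set

namespace MoebAux

/-- linear action of a 2x2 "matrix" (as a quadruple) on a vector in ℂ². -/
noncomputable def mvec (a b c d : ℂ) (v : ℂ × ℂ) : ℂ × ℂ := (a * v.1 + b * v.2, c * v.1 + d * v.2)

/-- projection ℂ² \ {0} → OnePoint ℂ. -/
noncomputable def proj (v : ℂ × ℂ) : OnePoint ℂ := if v.2 = 0 then ∞ else ((v.1 / v.2 : ℂ) : OnePoint ℂ)

/-- canonical lift OnePoint ℂ → ℂ². -/
def plift (z : OnePoint ℂ) : ℂ × ℂ := Option.elim z (1, 0) fun x => (x, 1)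

@[simp] lemma plift_coe (x : ℂ) : plift (x : OnePoint ℂ) = (x, 1) := rfl
@[simp] lemma plift_infty : plift (∞ : OnePoint ℂ) = (1, 0) := rfl

lemma plift_ne (z : OnePoint ℂ) : plift z ≠ 0 := by
  cases z <;> simp [Prod.ext_iff]

@[simp] lemma proj_plift (z : OnePoint ℂ) : proj (plift z) = z := by
  cases z <;> simp [proj]

lemma proj_smul {k : ℂ} (hk : k ≠ 0) (v : ℂ × ℂ) :
    proj (k * v.1, k * v.2) = proj v := by
  rcases eq_or_ne v.2 0 with h | h
  · simp [proj, h, hk]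
  · simp [proj, h, hk, mul_div_mul_left _ _ hk]

lemma plift_proj {v : ℂ × ℂ} (hv : v ≠ 0) :
    ∃ k : ℂ, k ≠ 0 ∧ plift (proj v) = (k * v.1, k * v.2) := by
  rcases eq_or_ne v.2 0 with h | h
  · have h1 : v.1 ≠ 0 := by
      intro h1; exact hv (Prod.ext h1 h)
    exact ⟨v.1⁻¹, inv_ne_zero h1, by simp [proj, h, inv_mul_cancel₀ h1]⟩
  · exact ⟨v.2⁻¹, inv_ne_zero h, by
      simp [proj, h, inv_mul_cancel₀ h, div_eq_inv_mul]⟩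

/-- quadruple determinant -/
def qdet (q : ℂ × ℂ × ℂ × ℂ) : ℂ := q.1 * q.2.2.2 - q.2.1 * q.2.2.1

/-- quadruple (matrix) multiplication -/
def qmul (p q : ℂ × ℂ × ℂ × ℂ) : ℂ × ℂ × ℂ × ℂ :=
  (p.1 * q.1 + p.2.1 * q.2.2.1, p.1 * q.2.1 + p.2.1 * q.2.2.2,
   p.2.2.1 * q.1 + p.2.2.2 * q.2.2.1, p.2.2.1 * q.2.1 + p.2.2.2 * q.2.2.2)

/-- adjugate -/
def qadj (q : ℂ × ℂ × ℂ × ℂ) : ℂ × ℂ × ℂ × ℂ := (q.2.2.2, -q.2.1, -q.2.2.1, q.1)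

def qsmul (k : ℂ) (q : ℂ × ℂ × ℂ × ℂ) : ℂ × ℂ × ℂ × ℂ :=
  (k * q.1, k * q.2.1, k * q.2.2.1, k * q.2.2.2)

/-- Möbius action of a quadruple on OnePoint ℂ. -/
noncomputable def appQ (q : ℂ × ℂ × ℂ × ℂ) (z : OnePoint ℂ) : OnePoint ℂ :=
  proj (mvec q.1 q.2.1 q.2.2.1 q.2.2.2 (plift z))

lemma mvec_mul (a b c d a' b' c' d' : ℂ) (v : ℂ × ℂ) :
    mvec a b c d (mvec a' b' c' d' v) =
      mvec (a * a' + b * c') (a * b' + b * d') (c * a' + d * c') (c * b' + d * d') v := by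
  simp only [mvec, Prod.mk.injEq]
  constructor <;> ring

lemma mvec_smul (a b c d k : ℂ) (v : ℂ × ℂ) :
    mvec a b c d (k * v.1, k * v.2) =
      (k * (mvec a b c d v).1, k * (mvec a b c d v).2) := by
  simp only [mvec, Prod.mk.injEq]
  constructor <;> ring

lemma mvec_ne_zero {a b c d : ℂ} (h : a * d - b * c ≠ 0) {v : ℂ × ℂ} (hv : v ≠ 0) :
    mvec a b c d v ≠ 0 := by
  intro h0
  have e1 : a * v.1 + b * v.2 = 0 := congrArg Prod.fst h0
  have e2 : c * v.1 + d * v.2 = 0 := congrArg Prod.snd h0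
  have hv1 : (a * d - b * c) * v.1 = 0 := by linear_combination d * e1 - b * e2
  have hv2 : (a * d - b * c) * v.2 = 0 := by linear_combination a * e2 - c * e1
  exact hv (Prod.ext ((mul_eq_zero.1 hv1).resolve_left h) ((mul_eq_zero.1 hv2).resolve_left h))

lemma qdet_eq (q : ℂ × ℂ × ℂ × ℂ) : qdet q = q.1 * q.2.2.2 - q.2.1 * q.2.2.1 := rfl

lemma appQ_qmul (p : ℂ × ℂ × ℂ × ℂ) {q : ℂ × ℂ × ℂ × ℂ} (hq : qdet q ≠ 0)
    (z : OnePoint ℂ) : appQ (qmul p q) z = appQ p (appQ q z) := by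
  have hne : mvec q.1 q.2.1 q.2.2.1 q.2.2.2 (plift z) ≠ 0 := mvec_ne_zero hq (plift_ne z)
  obtain ⟨k, hk, hkeq⟩ := plift_proj hne
  unfold appQ
  rw [hkeq, mvec_smul, proj_smul hk, mvec_mul]
  rfl

lemma appQ_qsmul {k : ℂ} (hk : k ≠ 0) (q : ℂ × ℂ × ℂ × ℂ) (z : OnePoint ℂ) :
    appQ (qsmul k q) z = appQ q z := by
  unfold appQ qsmul
  have : mvec (k * q.1) (k * q.2.1) (k * q.2.2.1) (k * q.2.2.2) (plift z) =
      (k * (mvec q.1 q.2.1 q.2.2.1 q.2.2.2 (plift z)).1,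
       k * (mvec q.1 q.2.1 q.2.2.1 q.2.2.2 (plift z)).2) := by
    simp only [mvec, Prod.mk.injEq]; constructor <;> ring
  rw [this, proj_smul hk]

lemma appQ_diag {k : ℂ} (hk : k ≠ 0) (z : OnePoint ℂ) : appQ (k, 0, 0, k) z = z := by
  unfold appQ
  have : mvec k 0 0 k (plift z) = (k * (plift z).1, k * (plift z).2) := by
    simp only [mvec, Prod.mk.injEq]; constructor <;> ring
  rw [this, proj_smul hk, proj_plift]

lemma qadj_qmul (q : ℂ × ℂ × ℂ × ℂ) : qmul (qadj q) q = (qdet q, 0, 0, qdet q) := by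
  simp only [qmul, qadj, qdet, Prod.mk.injEq]
  refine ⟨by ring, by ring, by ring, by ring⟩

lemma qmul_qadj (q : ℂ × ℂ × ℂ × ℂ) : qmul q (qadj q) = (qdet q, 0, 0, qdet q) := by
  simp only [qmul, qadj, qdet, Prod.mk.injEq]
  refine ⟨by ring, by ring, by ring, by ring⟩

lemma qdet_qmul (p q : ℂ × ℂ × ℂ × ℂ) : qdet (qmul p q) = qdet p * qdet q := by
  simp only [qmul, qdet]; ring

lemma qdet_qadj (q : ℂ × ℂ × ℂ × ℂ) : qdet (qadj q) = qdet q := by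
  simp only [qadj, qdet]; ring

lemma qmul_qsmul (p : ℂ × ℂ × ℂ × ℂ) (k : ℂ) (q : ℂ × ℂ × ℂ × ℂ) :
    qmul p (qsmul k q) = qsmul k (qmul p q) := by
  simp only [qmul, qsmul, Prod.mk.injEq]
  refine ⟨by ring, by ring, by ring, by ring⟩

lemma qdet_qsmul (k : ℂ) (q : ℂ × ℂ × ℂ × ℂ) : qdet (qsmul k q) = k ^ 2 * qdet q := by
  simp only [qsmul, qdet]; ring

end MoebAux

namespace MoebAux

/-- inversion map on the Riemann sphere -/
noncomputable def jmap : OnePoint ℂ → OnePoint ℂ := appQ (0, 1, 1, 0)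

lemma jmap_infty : jmap ∞ = ((0 : ℂ) : OnePoint ℂ) := by
  simp [jmap, appQ, mvec, proj]

lemma jmap_coe (x : ℂ) : jmap (x : OnePoint ℂ) =
    if x = 0 then ∞ else ((x⁻¹ : ℂ) : OnePoint ℂ) := by
  rcases eq_or_ne x 0 with h | h <;>
    simp [jmap, appQ, mvec, proj, h, one_div]

lemma jmap_coe_ne {x : ℂ} (h : x ≠ 0) : jmap (x : OnePoint ℂ) = ((x⁻¹ : ℂ) : OnePoint ℂ) := by
  rw [jmap_coe]; simp [h]

lemma jmap_coe_zero : jmap ((0:ℂ) : OnePoint ℂ) = ∞ := by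
  rw [jmap_coe]; simp

lemma continuous_jmap : Continuous jmap := by
  rw [OnePoint.continuous_iff]
  constructor
  · -- tendsto at infinity to (0 : ℂ)
    rw [jmap_infty]
    have h1 : Tendsto (fun x : ℂ => ((x⁻¹ : ℂ) : OnePoint ℂ)) (coclosedCompact ℂ)
        (𝓝 (((0:ℂ) : OnePoint ℂ))) := by
      have : Tendsto (fun x : ℂ => (x⁻¹ : ℂ)) (coclosedCompact ℂ) (𝓝 0) := by
        rw [coclosedCompact_eq_cocompact, ← Metric.cobounded_eq_cocompact]
        exact tendsto_inv₀_cobounded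
      exact (OnePoint.continuous_coe.tendsto _).comp this
    refine h1.congr' ?_
    have hmem : {(0:ℂ)}ᶜ ∈ coclosedCompact ℂ := by
      rw [coclosedCompact_eq_cocompact]
      exact (isCompact_singleton).compl_mem_cocompact
    filter_upwards [hmem] with x hx
    rw [jmap_coe_ne hx]
  · -- continuity on ℂ
    rw [continuous_iff_continuousAt]
    intro x
    rcases eq_or_ne x 0 with rfl | hx
    · -- at 0, tends to ∞
      unfold ContinuousAt
      have hval : (fun y : ℂ => jmap (y : OnePoint ℂ)) 0 = (∞ : OnePoint ℂ) := jmap_coe_zero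
      rw [hval, ← nhdsNE_sup_pure 0]
      refine Tendsto.sup ?_ ?_
      · have h1 : Tendsto (fun y : ℂ => ((y⁻¹ : ℂ) : OnePoint ℂ)) (𝓝[≠] (0:ℂ))
            (𝓝 (∞ : OnePoint ℂ)) := by
          have h2 : Tendsto (fun y : ℂ => (y⁻¹ : ℂ)) (𝓝[≠] (0:ℂ)) (coclosedCompact ℂ) := by
            rw [coclosedCompact_eq_cocompact, ← Metric.cobounded_eq_cocompact]
            exact tendsto_inv₀_nhdsNE_zero
          exact OnePoint.tendsto_coe_infty.comp h2
        refine h1.congr' ?_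
        filter_upwards [self_mem_nhdsWithin] with y hy
        rw [jmap_coe_ne hy]
      · rw [tendsto_pure_left]
        intro s hs
        simpa [jmap_coe_zero] using mem_of_mem_nhds hs
    · have h1 : ContinuousAt (fun y : ℂ => ((y⁻¹ : ℂ) : OnePoint ℂ)) x :=
        (OnePoint.continuous_coe.continuousAt).comp (ContinuousAt.inv₀ continuousAt_id hx)
      refine h1.congr ?_
      filter_upwards [isOpen_compl_singleton.mem_nhds (by simpa using hx)] with y hy
      rw [jmap_coe_ne hy]

/-- extraction of the finite part -/
def getf (z : OnePoint ℂ) : ℂ := Option.elim z 0 id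

@[simp] lemma getf_coe (x : ℂ) : getf (x : OnePoint ℂ) = x := rfl

lemma continuousAt_getf (x : ℂ) : ContinuousAt getf ((x : ℂ) : OnePoint ℂ) := by
  rw [OnePoint.continuousAt_coe]
  exact continuous_id.continuousAt.congr (by filter_upwards with y; rfl)

end MoebAux

namespace MoebAux

lemma appQ_coe_eq {q : ℂ × ℂ × ℂ × ℂ} {x : ℂ} (hB : q.2.2.1 * x + q.2.2.2 ≠ 0) :
    appQ q (x : OnePoint ℂ) =
      (((q.1 * x + q.2.1) / (q.2.2.1 * x + q.2.2.2) : ℂ) : OnePoint ℂ) := by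
  simp [appQ, mvec, proj, hB]

lemma appQ_contAt_coe {q : ℂ × ℂ × ℂ × ℂ} (h : qdet q ≠ 0) (x : ℂ) :
    ContinuousAt (fun p : (ℂ × ℂ × ℂ × ℂ) × OnePoint ℂ => appQ p.1 p.2)
      (q, (x : OnePoint ℂ)) := by
  have hemb : IsOpenEmbedding (Prod.map (id : (ℂ × ℂ × ℂ × ℂ) → (ℂ × ℂ × ℂ × ℂ)) ((↑) : ℂ → OnePoint ℂ)) :=
    IsOpenEmbedding.id.prodMap OnePoint.isOpenEmbedding_coe
  have hred : ContinuousAt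
      ((fun p : (ℂ × ℂ × ℂ × ℂ) × OnePoint ℂ => appQ p.1 p.2) ∘
        Prod.map id ((↑) : ℂ → OnePoint ℂ)) (q, x) → ContinuousAt
      (fun p : (ℂ × ℂ × ℂ × ℂ) × OnePoint ℂ => appQ p.1 p.2) (q, (x : OnePoint ℂ)) :=
    fun hc => hemb.continuousAt_iff.mp hc
  apply hred
  have hcompeq : ((fun p : (ℂ × ℂ × ℂ × ℂ) × OnePoint ℂ => appQ p.1 p.2) ∘
      Prod.map id ((↑) : ℂ → OnePoint ℂ)) =
      fun p : (ℂ × ℂ × ℂ × ℂ) × ℂ => appQ p.1 ((p.2 : OnePoint ℂ)) := rfl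
  rw [hcompeq]
  rcases eq_or_ne (q.2.2.1 * x + q.2.2.2) 0 with hB | hB
  · -- denominator vanishes; value is ∞
    have hA : q.1 * x + q.2.1 ≠ 0 := by
      intro hA
      apply h
      have : qdet q = q.1 * (q.2.2.1 * x + q.2.2.2) - q.2.2.1 * (q.1 * x + q.2.1) := by
        simp only [qdet]; ring
      rw [this, hA, hB]; ring
    have hg : ContinuousAt (fun p : (ℂ × ℂ × ℂ × ℂ) × ℂ =>
        jmap (((p.1.2.2.1 * p.2 + p.1.2.2.2) / (p.1.1 * p.2 + p.1.2.1) : ℂ) : OnePoint ℂ))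
        (q, x) := by
      apply continuous_jmap.continuousAt.comp
      apply (OnePoint.continuous_coe.continuousAt).comp
      exact ContinuousAt.div (by fun_prop) (by fun_prop) hA
    refine hg.congr ?_
    have hopen : IsOpen {p : (ℂ × ℂ × ℂ × ℂ) × ℂ | p.1.1 * p.2 + p.1.2.1 ≠ 0} :=
      isOpen_compl_singleton.preimage (by fun_prop)
    filter_upwards [hopen.mem_nhds hA] with p hp
    rcases eq_or_ne (p.1.2.2.1 * p.2 + p.1.2.2.2) 0 with hB' | hB'
    · have h0 : (p.1.2.2.1 * p.2 + p.1.2.2.2) / (p.1.1 * p.2 + p.1.2.1) = 0 := by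
        rw [hB', zero_div]
      rw [h0, jmap_coe_zero]
      simp [appQ, mvec, proj, hB']
    · have h0 : (p.1.2.2.1 * p.2 + p.1.2.2.2) / (p.1.1 * p.2 + p.1.2.1) ≠ 0 :=
        div_ne_zero hB' hp
      rw [jmap_coe_ne h0, inv_div, appQ_coe_eq hB']
  · -- denominator nonzero: locally a finite rational function
    have hg : ContinuousAt (fun p : (ℂ × ℂ × ℂ × ℂ) × ℂ =>
        (((p.1.1 * p.2 + p.1.2.1) / (p.1.2.2.1 * p.2 + p.1.2.2.2) : ℂ) : OnePoint ℂ))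
        (q, x) := by
      apply (OnePoint.continuous_coe.continuousAt).comp
      exact ContinuousAt.div (by fun_prop) (by fun_prop) hB
    refine hg.congr ?_
    have hopen : IsOpen {p : (ℂ × ℂ × ℂ × ℂ) × ℂ | p.1.2.2.1 * p.2 + p.1.2.2.2 ≠ 0} :=
      isOpen_compl_singleton.preimage (by fun_prop)
    filter_upwards [hopen.mem_nhds hB] with p hp
    rw [appQ_coe_eq hp]

lemma appQ_swap (p : ℂ × ℂ × ℂ × ℂ) (z : OnePoint ℂ) :
    appQ p z = appQ (p.2.1, p.1, p.2.2.2, p.2.2.1) (jmap z) := by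
  obtain ⟨a, b, c, d⟩ := p
  have hj : qdet ((0 : ℂ), (1 : ℂ), (1 : ℂ), (0 : ℂ)) ≠ 0 := by
    simp [qdet]
  have := appQ_qmul (p := ((b, a, d, c) : ℂ × ℂ × ℂ × ℂ)) hj z
  rw [show qmul ((b, a, d, c) : ℂ × ℂ × ℂ × ℂ) ((0 : ℂ), (1 : ℂ), (1 : ℂ), (0 : ℂ))
    = ((a, b, c, d) : ℂ × ℂ × ℂ × ℂ) by simp [qmul]] at this
  exact this

theorem contAt_appQ {q : ℂ × ℂ × ℂ × ℂ} (h : qdet q ≠ 0) (z : OnePoint ℂ) :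
    ContinuousAt (fun p : (ℂ × ℂ × ℂ × ℂ) × OnePoint ℂ => appQ p.1 p.2) (q, z) := by
  cases z with
  | coe x => exact appQ_contAt_coe h x
  | infty =>
    have hfun : (fun p : (ℂ × ℂ × ℂ × ℂ) × OnePoint ℂ => appQ p.1 p.2) =
        (fun p : (ℂ × ℂ × ℂ × ℂ) × OnePoint ℂ => appQ p.1 p.2) ∘
        (fun p : (ℂ × ℂ × ℂ × ℂ) × OnePoint ℂ =>
          ((p.1.2.1, p.1.1, p.1.2.2.2, p.1.2.2.1), jmap p.2)) := by
      funext p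
      exact appQ_swap p.1 p.2
    rw [hfun]
    have hdet' : qdet ((q.2.1, q.1, q.2.2.2, q.2.2.1) : ℂ × ℂ × ℂ × ℂ) ≠ 0 := by
      intro h'
      apply h
      have : qdet q = -qdet ((q.2.1, q.1, q.2.2.2, q.2.2.1) : ℂ × ℂ × ℂ × ℂ) := by
        simp only [qdet]; ring
      rw [this, h', neg_zero]
    have houter : ContinuousAt (fun p : (ℂ × ℂ × ℂ × ℂ) × OnePoint ℂ => appQ p.1 p.2)
        ((q.2.1, q.1, q.2.2.2, q.2.2.1), jmap ∞) := by
      rw [jmap_infty]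
      exact appQ_contAt_coe hdet' 0
    have hinner : ContinuousAt (fun p : (ℂ × ℂ × ℂ × ℂ) × OnePoint ℂ =>
        ((p.1.2.1, p.1.1, p.1.2.2.2, p.1.2.2.1), jmap p.2)) (q, ∞) :=
      ((continuous_fst.snd.fst.prodMk (continuous_fst.fst.prodMk
        (continuous_fst.snd.snd.snd.prodMk continuous_fst.snd.snd.fst))).prodMk
        (continuous_jmap.comp continuous_snd)).continuousAt
    exact ContinuousAt.comp houter hinner

/-- fixed Möbius maps are continuous -/
theorem continuous_appQ {q : ℂ × ℂ × ℂ × ℂ} (h : qdet q ≠ 0) :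
    Continuous (appQ q) := by
  rw [continuous_iff_continuousAt]
  intro z
  exact (contAt_appQ h z).comp ((continuous_const.prodMk continuous_id).continuousAt)

/-- The homeomorphism of the sphere induced by an invertible quadruple. -/
noncomputable def qHomeo (q : ℂ × ℂ × ℂ × ℂ) (h : qdet q ≠ 0) :
    OnePoint ℂ ≃ₜ OnePoint ℂ where
  toFun := appQ q
  invFun := appQ (qadj q)
  left_inv z := by
    rw [← appQ_qmul _ h, qadj_qmul, appQ_diag h]
  right_inv z := by
    have h' : qdet (qadj q) ≠ 0 := by rwa [qdet_qadj]
    rw [← appQ_qmul _ h', qmul_qadj, appQ_diag h]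
  continuous_toFun := continuous_appQ h
  continuous_invFun := continuous_appQ (by rwa [qdet_qadj])

end MoebAux

namespace MoebAux

/-- 2x2 determinant of a pair of vectors -/
def dd (u v : ℂ × ℂ) : ℂ := u.1 * v.2 - u.2 * v.1

lemma dd_swap (u v : ℂ × ℂ) : dd u v = -dd v u := by simp only [dd]; ring

lemma ne_zero_of_dd_left {u v : ℂ × ℂ} (h : dd u v ≠ 0) : u ≠ 0 := by
  rintro rfl; exact h (by simp [dd])

lemma ne_zero_of_dd_right {u v : ℂ × ℂ} (h : dd u v ≠ 0) : v ≠ 0 := by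
  rintro rfl; exact h (by simp [dd])

/-- The matrix sending the projective points of u, v, w to 0, 1, ∞. -/
noncomputable def nmat (u v w : ℂ × ℂ) : ℂ × ℂ × ℂ × ℂ :=
  (dd v w / dd u w * u.2, -(dd v w / dd u w * u.1),
   -(dd v u / dd w u * w.2), dd v u / dd w u * w.1)

section nmatProps

variable {u v w : ℂ × ℂ} (huv : dd u v ≠ 0) (huw : dd u w ≠ 0) (hvw : dd v w ≠ 0)

include huv huw hvw

lemma qdet_nmat : qdet (nmat u v w) ≠ 0 := by
  have hwu : dd w u ≠ 0 := by rw [dd_swap]; exact neg_ne_zero.2 huw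
  have hvu : dd v u ≠ 0 := by rw [dd_swap]; exact neg_ne_zero.2 huv
  have hcalc : qdet (nmat u v w) = -(dd v w / dd u w * (dd v u / dd w u) * dd u w) := by
    simp only [qdet, nmat, dd]; ring
  rw [hcalc]
  exact neg_ne_zero.2 (mul_ne_zero (mul_ne_zero (div_ne_zero hvw huw)
    (div_ne_zero hvu hwu)) huw)

lemma appQ_nmat_left : appQ (nmat u v w) (proj u) = ((0 : ℂ) : OnePoint ℂ) := by
  have hwu : dd w u ≠ 0 := by rw [dd_swap]; exact neg_ne_zero.2 huw
  have hvu : dd v u ≠ 0 := by rw [dd_swap]; exact neg_ne_zero.2 huv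
  obtain ⟨k, hk, hkeq⟩ := plift_proj (ne_zero_of_dd_left huv)
  unfold appQ
  rw [hkeq, mvec_smul, proj_smul hk]
  have hmv : mvec (nmat u v w).1 (nmat u v w).2.1 (nmat u v w).2.2.1 (nmat u v w).2.2.2 u
      = (0, dd v u / dd w u * dd w u) := by
    simp only [nmat, mvec, dd, Prod.mk.injEq]
    constructor <;> ring
  rw [hmv]
  have hX : dd v u / dd w u * dd w u ≠ 0 := mul_ne_zero (div_ne_zero hvu hwu) hwu
  simp [proj, hX]

lemma appQ_nmat_mid : appQ (nmat u v w) (proj v) = ((1 : ℂ) : OnePoint ℂ) := by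
  have hwu : dd w u ≠ 0 := by rw [dd_swap]; exact neg_ne_zero.2 huw
  have hvu : dd v u ≠ 0 := by rw [dd_swap]; exact neg_ne_zero.2 huv
  have hwv : dd w v ≠ 0 := by rw [dd_swap]; exact neg_ne_zero.2 hvw
  obtain ⟨k, hk, hkeq⟩ := plift_proj (ne_zero_of_dd_right huv)
  unfold appQ
  rw [hkeq, mvec_smul, proj_smul hk]
  have key : -(dd v w / dd u w * dd u v) = dd v u / dd w u * dd w v := by
    rw [div_mul_eq_mul_div, div_mul_eq_mul_div, ← neg_div, div_eq_div_iff huw hwu]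
    simp only [dd]; ring
  have hmv : mvec (nmat u v w).1 (nmat u v w).2.1 (nmat u v w).2.2.1 (nmat u v w).2.2.2 v
      = (dd v u / dd w u * dd w v, dd v u / dd w u * dd w v) := by
    simp only [nmat, mvec, Prod.mk.injEq]
    constructor
    · rw [← key]; simp only [dd]; ring
    · simp only [dd]; ring
  rw [hmv]
  have hX : dd v u / dd w u * dd w v ≠ 0 := mul_ne_zero (div_ne_zero hvu hwu) hwv
  simp [proj, hX, div_self hX]

lemma appQ_nmat_right : appQ (nmat u v w) (proj w) = (∞ : OnePoint ℂ) := by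
  obtain ⟨k, hk, hkeq⟩ := plift_proj (ne_zero_of_dd_right huw)
  unfold appQ
  rw [hkeq, mvec_smul, proj_smul hk]
  have hmv : mvec (nmat u v w).1 (nmat u v w).2.1 (nmat u v w).2.2.1 (nmat u v w).2.2.2 w
      = (-(dd v w / dd u w * dd u w), 0) := by
    simp only [nmat, mvec, Prod.mk.injEq]
    constructor <;> (simp only [dd]; ring)
  rw [hmv]
  simp [proj]

end nmatProps

lemma nmat_scale {u v w : ℂ × ℂ} (α β γ : ℂ) (hα : α ≠ 0) (hγ : γ ≠ 0)
    (huw : dd u w ≠ 0) :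
    nmat (α * u.1, α * u.2) (β * v.1, β * v.2) (γ * w.1, γ * w.2) = qsmul β (nmat u v w) := by
  have hwu : dd w u ≠ 0 := by rw [dd_swap]; exact neg_ne_zero.2 huw
  have e1 : dd (β * v.1, β * v.2) (γ * w.1, γ * w.2) = β * γ * dd v w := by
    simp only [dd]; ring
  have e2 : dd (α * u.1, α * u.2) (γ * w.1, γ * w.2) = α * γ * dd u w := by
    simp only [dd]; ring
  have e3 : dd (β * v.1, β * v.2) (α * u.1, α * u.2) = β * α * dd v u := by
    simp only [dd]; ring
  have e4 : dd (γ * w.1, γ * w.2) (α * u.1, α * u.2) = γ * α * dd w u := by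
    simp only [dd]; ring
  simp only [nmat, qsmul, e1, e2, e3, e4, Prod.mk.injEq]
  refine ⟨?_, ?_, ?_, ?_⟩ <;> field_simp

lemma dd_plift_ne {z z' : OnePoint ℂ} (h : z ≠ z') : dd (plift z) (plift z') ≠ 0 := by
  cases z with
  | infty =>
    cases z' with
    | infty => exact absurd rfl h
    | coe y => simp [dd]
  | coe x =>
    cases z' with
    | infty => simp [dd]
    | coe y =>
      have : x ≠ y := fun hxy => h (by rw [hxy])
      simp only [plift_coe, dd, mul_one, one_mul]
      exact sub_ne_zero.2 this

end MoebAux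

namespace MoebAux

lemma exists_local_lift (w₀ : OnePoint ℂ) :
    ∃ (U : Set (OnePoint ℂ)) (L : OnePoint ℂ → ℂ × ℂ), IsOpen U ∧ w₀ ∈ U ∧
      (∀ w ∈ U, ContinuousAt L w) ∧ ∀ w ∈ U, L w ≠ 0 ∧ proj (L w) = w := by
  cases w₀ with
  | coe x₀ =>
    refine ⟨Set.range ((↑) : ℂ → OnePoint ℂ), fun w => (getf w, 1),
      OnePoint.isOpen_range_coe, ⟨x₀, rfl⟩, ?_, ?_⟩
    · rintro w ⟨x, rfl⟩
      exact (continuousAt_getf x).prodMk continuousAt_const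
    · rintro w ⟨x, rfl⟩
      constructor
      · simp [Prod.ext_iff]
      · simp [proj]
  | infty =>
    refine ⟨{((0 : ℂ) : OnePoint ℂ)}ᶜ, fun w => (1, getf (jmap w)),
      isOpen_compl_singleton, by simp, ?_, ?_⟩
    · intro w hw
      have hfin : ∃ y : ℂ, jmap w = (y : OnePoint ℂ) := by
        cases w with
        | infty => exact ⟨0, jmap_infty⟩
        | coe x =>
          have hx : x ≠ 0 := fun h => hw (by rw [h]; rfl)
          exact ⟨x⁻¹, jmap_coe_ne hx⟩
      obtain ⟨y, hy⟩ := hfin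
      refine continuousAt_const.prodMk ?_
      have : ContinuousAt (getf ∘ jmap) w := by
        refine ContinuousAt.comp ?_ continuous_jmap.continuousAt
        rw [hy]
        exact continuousAt_getf y
      exact this
    · intro w hw
      cases w with
      | infty =>
        constructor
        · simp [jmap_infty, Prod.ext_iff]
        · simp [jmap_infty, proj]
      | coe x =>
        have hx : x ≠ 0 := fun h => hw (by rw [h]; rfl)
        simp only [jmap_coe_ne hx, getf_coe]
        constructor
        · simp [Prod.ext_iff]
        · simp [proj, inv_ne_zero hx, one_div, inv_inv]

lemma contAt_nmat3 {p : (ℂ × ℂ) × (ℂ × ℂ) × (ℂ × ℂ)}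
    (huw : dd p.1 p.2.2 ≠ 0) :
    ContinuousAt (fun x : (ℂ × ℂ) × (ℂ × ℂ) × (ℂ × ℂ) => nmat x.1 x.2.1 x.2.2) p := by
  have hwu : dd p.2.2 p.1 ≠ 0 := by rw [dd_swap]; exact neg_ne_zero.2 huw
  have h1 : (p.1).1 * (p.2.2).2 - (p.1).2 * (p.2.2).1 ≠ 0 := huw
  have h2 : (p.2.2).1 * (p.1).2 - (p.2.2).2 * (p.1).1 ≠ 0 := hwu
  simp only [nmat, dd]
  fun_prop (disch := assumption)

lemma continuous_qmul_left (c : ℂ × ℂ × ℂ × ℂ) :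
    Continuous (fun q : ℂ × ℂ × ℂ × ℂ => qmul c q) := by
  unfold qmul
  fun_prop

end MoebAux

namespace MoebAux

/-- The normalizing matrix for a triple of points of the sphere. -/
noncomputable def NtQ (a b c : OnePoint ℂ) : ℂ × ℂ × ℂ × ℂ :=
  nmat (plift a) (plift b) (plift c)

section NtQProps

variable {a b c : OnePoint ℂ} (hab : a ≠ b) (hac : a ≠ c) (hbc : b ≠ c)

include hab hac hbc

lemma qdet_NtQ : qdet (NtQ a b c) ≠ 0 :=
  qdet_nmat (dd_plift_ne hab) (dd_plift_ne hac) (dd_plift_ne hbc)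

lemma appQ_NtQ_a : appQ (NtQ a b c) a = ((0 : ℂ) : OnePoint ℂ) := by
  have := appQ_nmat_left (dd_plift_ne hab) (dd_plift_ne hac) (dd_plift_ne hbc)
  rwa [proj_plift] at this

lemma appQ_NtQ_b : appQ (NtQ a b c) b = ((1 : ℂ) : OnePoint ℂ) := by
  have := appQ_nmat_mid (dd_plift_ne hab) (dd_plift_ne hac) (dd_plift_ne hbc)
  rwa [proj_plift] at this

lemma appQ_NtQ_c : appQ (NtQ a b c) c = (∞ : OnePoint ℂ) := by
  have := appQ_nmat_right (dd_plift_ne hab) (dd_plift_ne hac) (dd_plift_ne hbc)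
  rwa [proj_plift] at this

end NtQProps

end MoebAux

open MoebAux in
theorem exists_isotopy_fixing_three_points'
    (F : unitInterval → OnePoint ℂ → OnePoint ℂ)
    (hFc : Continuous (fun p : unitInterval × OnePoint ℂ => F p.1 p.2))
    (hFh : ∀ t, ∃ h : OnePoint ℂ ≃ₜ OnePoint ℂ, F t = h) (hF0 : F 0 = id)
    (z₁ z₂ z₃ : OnePoint ℂ) (h12 : z₁ ≠ z₂) (h13 : z₁ ≠ z₃) (h23 : z₂ ≠ z₃)
    (hfix₁ : F 1 z₁ = z₁) (hfix₂ : F 1 z₂ = z₂) (hfix₃ : F 1 z₃ = z₃) :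
    ∃ F' : unitInterval → OnePoint ℂ → OnePoint ℂ,
      (Continuous (fun p : unitInterval × OnePoint ℂ => F' p.1 p.2) ∧
        (∀ t, ∃ h : OnePoint ℂ ≃ₜ OnePoint ℂ, F' t = h) ∧ F' 0 = id) ∧ F' 1 = F 1 ∧
      ∀ t, F' t z₁ = z₁ ∧ F' t z₂ = z₂ ∧ F' t z₃ = z₃ := by
  have hinj : ∀ t, Function.Injective (F t) := by
    intro t
    obtain ⟨g, hg⟩ := hFh t
    rw [hg]
    exact g.injective
  have hd : ∀ t, F t z₁ ≠ F t z₂ ∧ F t z₁ ≠ F t z₃ ∧ F t z₂ ≠ F t z₃ := fun t =>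
    ⟨fun h => h12 (hinj t h), fun h => h13 (hinj t h), fun h => h23 (hinj t h)⟩
  have hdn0 : qdet (NtQ z₁ z₂ z₃) ≠ 0 := qdet_NtQ h12 h13 h23
  have hdNt : ∀ t, qdet (NtQ (F t z₁) (F t z₂) (F t z₃)) ≠ 0 := fun t =>
    qdet_NtQ (hd t).1 (hd t).2.1 (hd t).2.2
  have hb : ∀ z, Continuous fun t : unitInterval => F t z := fun z =>
    hFc.comp (continuous_id.prodMk continuous_const)
  -- the corrected isotopy
  refine ⟨fun t z => appQ (qmul (qadj (NtQ z₁ z₂ z₃))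
    (NtQ (F t z₁) (F t z₂) (F t z₃))) (F t z), ⟨?_, ?_, ?_⟩, ?_, ?_⟩
  · -- continuity
    rw [continuous_iff_continuousAt]
    rintro ⟨t₀, z₀⟩
    obtain ⟨U₁, L₁, hU₁o, hU₁m, hL₁c, hL₁p⟩ := exists_local_lift (F t₀ z₁)
    obtain ⟨U₂, L₂, hU₂o, hU₂m, hL₂c, hL₂p⟩ := exists_local_lift (F t₀ z₂)
    obtain ⟨U₃, L₃, hU₃o, hU₃m, hL₃c, hL₃p⟩ := exists_local_lift (F t₀ z₃)
    set S : Set unitInterval := (fun t => F t z₁) ⁻¹' U₁ ∩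
      ((fun t => F t z₂) ⁻¹' U₂ ∩ (fun t => F t z₃) ⁻¹' U₃) with hS
    have hSo : IsOpen S :=
      (hU₁o.preimage (hb z₁)).inter ((hU₂o.preimage (hb z₂)).inter (hU₃o.preimage (hb z₃)))
    have ht₀S : t₀ ∈ S := ⟨hU₁m, hU₂m, hU₃m⟩
    set G : unitInterval → ℂ × ℂ × ℂ × ℂ := fun t => qmul (qadj (NtQ z₁ z₂ z₃))
      (nmat (L₁ (F t z₁)) (L₂ (F t z₂)) (L₃ (F t z₃))) with hG
    -- scalar relation between Q and G on S
    have hrel : ∀ t ∈ S, ∃ k : ℂ, k ≠ 0 ∧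
        qmul (qadj (NtQ z₁ z₂ z₃)) (NtQ (F t z₁) (F t z₂) (F t z₃)) = qsmul k (G t) := by
      intro t ht
      obtain ⟨hne₁, hproj₁⟩ := hL₁p _ ht.1
      obtain ⟨hne₂, hproj₂⟩ := hL₂p _ ht.2.1
      obtain ⟨hne₃, hproj₃⟩ := hL₃p _ ht.2.2
      obtain ⟨k₁, hk₁, he₁⟩ := plift_proj hne₁
      obtain ⟨k₂, hk₂, he₂⟩ := plift_proj hne₂
      obtain ⟨k₃, hk₃, he₃⟩ := plift_proj hne₃
      rw [hproj₁] at he₁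
      rw [hproj₂] at he₂
      rw [hproj₃] at he₃
      have hdd13 : dd (L₁ (F t z₁)) (L₃ (F t z₃)) ≠ 0 := by
        have h0 : dd (plift (F t z₁)) (plift (F t z₃)) ≠ 0 := dd_plift_ne (hd t).2.1
        rw [he₁, he₃] at h0
        have hcalc : dd (k₁ * (L₁ (F t z₁)).1, k₁ * (L₁ (F t z₁)).2)
            (k₃ * (L₃ (F t z₃)).1, k₃ * (L₃ (F t z₃)).2)
            = k₁ * k₃ * dd (L₁ (F t z₁)) (L₃ (F t z₃)) := by
          simp only [dd]; ring
        rw [hcalc] at h0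
        intro h
        exact h0 (by rw [h, mul_zero])
      refine ⟨k₂, hk₂, ?_⟩
      have : NtQ (F t z₁) (F t z₂) (F t z₃)
          = qsmul k₂ (nmat (L₁ (F t z₁)) (L₂ (F t z₂)) (L₃ (F t z₃))) := by
        rw [NtQ, he₁, he₂, he₃]
        exact nmat_scale k₁ k₂ k₃ hk₁ hk₃ hdd13
      rw [this, qmul_qsmul]
    -- continuity of G at t₀
    have hddt₀ : dd (L₁ (F t₀ z₁)) (L₃ (F t₀ z₃)) ≠ 0 := by
      obtain ⟨hne₁, hproj₁⟩ := hL₁p _ hU₁m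
      obtain ⟨hne₃, hproj₃⟩ := hL₃p _ hU₃m
      obtain ⟨k₁, hk₁, he₁⟩ := plift_proj hne₁
      obtain ⟨k₃, hk₃, he₃⟩ := plift_proj hne₃
      rw [hproj₁] at he₁
      rw [hproj₃] at he₃
      have h0 : dd (plift (F t₀ z₁)) (plift (F t₀ z₃)) ≠ 0 := dd_plift_ne (hd t₀).2.1
      rw [he₁, he₃] at h0
      have hcalc : dd (k₁ * (L₁ (F t₀ z₁)).1, k₁ * (L₁ (F t₀ z₁)).2)
          (k₃ * (L₃ (F t₀ z₃)).1, k₃ * (L₃ (F t₀ z₃)).2)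
          = k₁ * k₃ * dd (L₁ (F t₀ z₁)) (L₃ (F t₀ z₃)) := by
        simp only [dd]; ring
      rw [hcalc] at h0
      intro h
      exact h0 (by rw [h, mul_zero])
    have hGt : ContinuousAt G t₀ := by
      have hins : ContinuousAt (fun t : unitInterval =>
          ((L₁ (F t z₁), L₂ (F t z₂), L₃ (F t z₃)) : (ℂ × ℂ) × (ℂ × ℂ) × (ℂ × ℂ))) t₀ := by
        have c1 : ContinuousAt (L₁ ∘ fun t : unitInterval => F t z₁) t₀ :=
          ContinuousAt.comp (x := t₀) (f := fun t : unitInterval => F t z₁)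
            (hL₁c _ hU₁m) (hb z₁).continuousAt
        have c2 : ContinuousAt (L₂ ∘ fun t : unitInterval => F t z₂) t₀ :=
          ContinuousAt.comp (x := t₀) (f := fun t : unitInterval => F t z₂)
            (hL₂c _ hU₂m) (hb z₂).continuousAt
        have c3 : ContinuousAt (L₃ ∘ fun t : unitInterval => F t z₃) t₀ :=
          ContinuousAt.comp (x := t₀) (f := fun t : unitInterval => F t z₃)
            (hL₃c _ hU₃m) (hb z₃).continuousAt
        exact ContinuousAt.prodMk c1 (ContinuousAt.prodMk c2 c3)
      have hnm : ContinuousAt ((fun x : (ℂ × ℂ) × (ℂ × ℂ) × (ℂ × ℂ) => nmat x.1 x.2.1 x.2.2) ∘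
          (fun t : unitInterval =>
            ((L₁ (F t z₁), L₂ (F t z₂), L₃ (F t z₃)) : (ℂ × ℂ) × (ℂ × ℂ) × (ℂ × ℂ)))) t₀ :=
        ContinuousAt.comp (contAt_nmat3 hddt₀) hins
      have hfin : ContinuousAt ((fun q : ℂ × ℂ × ℂ × ℂ => qmul (qadj (NtQ z₁ z₂ z₃)) q) ∘
          ((fun x : (ℂ × ℂ) × (ℂ × ℂ) × (ℂ × ℂ) => nmat x.1 x.2.1 x.2.2) ∘
          (fun t : unitInterval =>
            ((L₁ (F t z₁), L₂ (F t z₂), L₃ (F t z₃)) : (ℂ × ℂ) × (ℂ × ℂ) × (ℂ × ℂ))))) t₀ :=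
        (continuous_qmul_left (qadj (NtQ z₁ z₂ z₃))).continuousAt.comp hnm
      exact hfin
    -- determinant of G t₀ is nonzero
    have hdGt₀ : qdet (G t₀) ≠ 0 := by
      obtain ⟨k, hk, he⟩ := hrel t₀ ht₀S
      have := hdn0
      have hq : qdet (qmul (qadj (NtQ z₁ z₂ z₃)) (NtQ (F t₀ z₁) (F t₀ z₂) (F t₀ z₃))) ≠ 0 := by
        rw [qdet_qmul, qdet_qadj]
        exact mul_ne_zero hdn0 (hdNt t₀)
      rw [he, qdet_qsmul] at hq
      exact fun h => hq (by rw [h, mul_zero])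
    -- the G-version is continuous at (t₀, z₀)
    have hmain : ContinuousAt (fun p : unitInterval × OnePoint ℂ =>
        appQ (G p.1) (F p.1 p.2)) (t₀, z₀) := by
      have hpair : ContinuousAt (fun p : unitInterval × OnePoint ℂ =>
          ((G p.1, F p.1 p.2) : (ℂ × ℂ × ℂ × ℂ) × OnePoint ℂ)) (t₀, z₀) :=
        ContinuousAt.prodMk (show ContinuousAt (G ∘ Prod.fst) (t₀, z₀) from
          hGt.comp continuous_fst.continuousAt) hFc.continuousAt
      have hfin : ContinuousAt ((fun r : (ℂ × ℂ × ℂ × ℂ) × OnePoint ℂ => appQ r.1 r.2) ∘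
          (fun p : unitInterval × OnePoint ℂ =>
            ((G p.1, F p.1 p.2) : (ℂ × ℂ × ℂ × ℂ) × OnePoint ℂ))) (t₀, z₀) :=
        ContinuousAt.comp (contAt_appQ hdGt₀ (F t₀ z₀)) hpair
      exact hfin
    refine hmain.congr ?_
    have hmem : S ×ˢ (Set.univ : Set (OnePoint ℂ)) ∈ 𝓝 ((t₀, z₀) : unitInterval × OnePoint ℂ) :=
      prod_mem_nhds (hSo.mem_nhds ht₀S) Filter.univ_mem
    filter_upwards [hmem] with p hp
    obtain ⟨k, hk, he⟩ := hrel p.1 hp.1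
    rw [he, appQ_qsmul hk]
  · -- each time is a homeomorphism
    intro t
    obtain ⟨g, hg⟩ := hFh t
    have hdt : qdet (qmul (qadj (NtQ z₁ z₂ z₃)) (NtQ (F t z₁) (F t z₂) (F t z₃))) ≠ 0 := by
      rw [qdet_qmul, qdet_qadj]
      exact mul_ne_zero hdn0 (hdNt t)
    refine ⟨g.trans (qHomeo _ hdt), ?_⟩
    funext z
    have hz : F t z = g z := congrFun hg z
    show appQ (qmul (qadj (NtQ z₁ z₂ z₃)) (NtQ (F t z₁) (F t z₂) (F t z₃))) (F t z)
      = (g.trans (qHomeo (qmul (qadj (NtQ z₁ z₂ z₃)) (NtQ (F t z₁) (F t z₂) (F t z₃))) hdt)) z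
    rw [hz]
    rfl
  · -- starts at the identity
    funext z
    have h0 : ∀ w, F 0 w = w := fun w => by rw [hF0]; rfl
    show appQ (qmul (qadj (NtQ z₁ z₂ z₃)) (NtQ (F 0 z₁) (F 0 z₂) (F 0 z₃))) (F 0 z) = z
    rw [h0 z₁, h0 z₂, h0 z₃, h0 z, qadj_qmul, appQ_diag hdn0]
  · -- ends at F 1
    funext z
    show appQ (qmul (qadj (NtQ z₁ z₂ z₃)) (NtQ (F 1 z₁) (F 1 z₂) (F 1 z₃))) (F 1 z) = F 1 z
    rw [hfix₁, hfix₂, hfix₃, qadj_qmul, appQ_diag hdn0]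
  · -- fixes the three points
    intro t
    have hinv : ∀ w, appQ (qadj (NtQ z₁ z₂ z₃)) (appQ (NtQ z₁ z₂ z₃) w) = w := fun w => by
      rw [← appQ_qmul _ hdn0, qadj_qmul, appQ_diag hdn0]
    refine ⟨?_, ?_, ?_⟩
    · show appQ (qmul (qadj (NtQ z₁ z₂ z₃)) (NtQ (F t z₁) (F t z₂) (F t z₃))) (F t z₁) = z₁
      rw [appQ_qmul _ (hdNt t), appQ_NtQ_a (hd t).1 (hd t).2.1 (hd t).2.2]
      have := hinv z₁
      rwa [appQ_NtQ_a h12 h13 h23] at this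
    · show appQ (qmul (qadj (NtQ z₁ z₂ z₃)) (NtQ (F t z₁) (F t z₂) (F t z₃))) (F t z₂) = z₂
      rw [appQ_qmul _ (hdNt t), appQ_NtQ_b (hd t).1 (hd t).2.1 (hd t).2.2]
      have := hinv z₂
      rwa [appQ_NtQ_b h12 h13 h23] at this
    · show appQ (qmul (qadj (NtQ z₁ z₂ z₃)) (NtQ (F t z₁) (F t z₂) (F t z₃))) (F t z₃) = z₃
      rw [appQ_qmul _ (hdNt t), appQ_NtQ_c (hd t).1 (hd t).2.1 (hd t).2.2]
      have := hinv z₃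
      rwa [appQ_NtQ_c h12 h13 h23] at this


/-- Given an identity isotopy `I = (F_t)` on the sphere `S² = ℂ ∪ {∞}` and three distinct
fixed points `z₁, z₂, z₃` of the time-one map `F₁`, there exists another identity isotopy
`I'` from the identity to `F₁` fixing `z₁, z₂, z₃` for all times. -/
theorem exists_isotopy_fixing_three_points
    (F : unitInterval → OnePoint ℂ → OnePoint ℂ) (hF : IsIdentityIsotopy F)
    (z₁ z₂ z₃ : OnePoint ℂ) (h12 : z₁ ≠ z₂) (h13 : z₁ ≠ z₃) (h23 : z₂ ≠ z₃)
    (hfix₁ : F 1 z₁ = z₁) (hfix₂ : F 1 z₂ = z₂) (hfix₃ : F 1 z₃ = z₃) :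
    ∃ F' : unitInterval → OnePoint ℂ → OnePoint ℂ,
      IsIdentityIsotopy F' ∧ F' 1 = F 1 ∧
      ∀ t, F' t z₁ = z₁ ∧ F' t z₂ = z₂ ∧ F' t z₃ = z₃ := by
  obtain ⟨hFc, hFh, hF0⟩ := hF
  obtain ⟨F', ⟨hc, hh, h0⟩, h1, hfix⟩ :=
    exists_isotopy_fixing_three_points' F hFc hFh hF0 z₁ z₂ z₃ h12 h13 h23 hfix₁ hfix₂ hfix₃
  exact ⟨F', ⟨hc, hh, h0⟩, h1, hfix⟩
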